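/- arXiv:2106.14288 — 4 statements merged into one kernel-verified Lean document; each statement's English description precedes it below -/
import Mathlib

section
/- Let d > 0. For every ε₀ > 0 there exists N₀ such that for all N ≥ N₀: if α_1, …, α_N are independent standard Gaussian random variables, ζ_i = α_i² for 1 ≤ i ≤ N, and ζ_min = min_{1 ≤ i ≤ N} ζ_i, then E[ζ_1^d] / E[(N ζ_min)^d] ≥ 1/(1 + ε₀). -/
open MeasureTheory ProbabilityTheory Filter Real Set Topology
open scoped NNReal ENNReal


lemma integrable_abs_rpow_mul_exp_neg_sq {b s : ℝ} (hb : 0 < b) (hs : -1 < s) :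
    Integrable fun x : ℝ => |x| ^ s * Real.exp (-b * x ^ 2) := by
  have h1 : IntegrableOn (fun x : ℝ => |x| ^ s * Real.exp (-b * x ^ 2)) (Ioi 0) := by
    refine (integrableOn_rpow_mul_exp_neg_mul_sq hb hs).congr_fun ?_ measurableSet_Ioi
    intro x hx
    show x ^ s * rexp (-b * x ^ 2) = |x| ^ s * rexp (-b * x ^ 2)
    rw [abs_of_pos hx]
  have h2 : IntegrableOn (fun x : ℝ => |x| ^ s * Real.exp (-b * x ^ 2)) (Iio 0) := by
    rw [← (Measure.measurePreserving_neg (volume : Measure ℝ)).integrableOn_comp_preimage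
      (Homeomorph.neg ℝ).measurableEmbedding]
    simp only [Function.comp_def, abs_neg, neg_sq, neg_preimage, neg_Iio, neg_neg, neg_zero]
    exact h1
  rw [← integrableOn_univ, ← @Iio_union_Ici _ _ (0 : ℝ), integrableOn_union]
  exact ⟨h2, (integrableOn_Ici_iff_integrableOn_Ioi (by simp)).2 h1⟩

lemma integrable_sq_rpow_gaussian {p : ℝ} (hp : 0 < p) :
    Integrable (fun x : ℝ => (x ^ 2) ^ p) (gaussianReal 0 1) := by
  rw [gaussianReal_of_var_ne_zero 0 one_ne_zero,
    integrable_withDensity_iff (measurable_gaussianPDF 0 1)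
      (Filter.Eventually.of_forall fun x => ENNReal.ofReal_lt_top)]
  have key : ∀ x : ℝ, (x ^ 2) ^ p * (gaussianPDF 0 1 x).toReal
      = (√(2 * π))⁻¹ * (|x| ^ (2 * p) * Real.exp (-(1/2) * x ^ 2)) := by
    intro x
    rw [gaussianPDF, ENNReal.toReal_ofReal (gaussianPDFReal_nonneg _ _ _), gaussianPDFReal]
    have hx : (x ^ 2 : ℝ) ^ p = |x| ^ (2 * p) := by
      rw [← sq_abs, ← Real.rpow_natCast |x| 2, ← Real.rpow_mul (abs_nonneg x)]
      norm_num
    have harg : -(x - 0) ^ 2 / (2 * ((1:ℝ≥0) : ℝ)) = -(1/2) * x ^ 2 := by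
      push_cast
      ring
    rw [hx, harg]
    push_cast
    ring
  refine (((integrable_abs_rpow_mul_exp_neg_sq (by norm_num : (0:ℝ) < 1/2)
    (by linarith : (-1:ℝ) < 2 * p)).const_mul ((√(2 * π))⁻¹)).congr ?_)
  exact Filter.Eventually.of_forall fun x => (key x).symm

lemma gaussian_moment_pos {p : ℝ} (hp : 0 < p) :
    0 < ∫ x, (x ^ 2) ^ p ∂(gaussianReal 0 1) := by
  rw [integral_pos_iff_support_of_nonneg
    (fun x => Real.rpow_nonneg (sq_nonneg x) p) (integrable_sq_rpow_gaussian hp)]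
  have hsupp : Function.support (fun x : ℝ => (x ^ 2) ^ p) = {(0:ℝ)}ᶜ := by
    ext x
    simp only [Function.mem_support, Set.mem_compl_iff, Set.mem_singleton_iff]
    constructor
    · intro h hx
      rw [hx] at h
      simp [Real.zero_rpow hp.ne'] at h
    · intro hx h
      have hx2 : 0 < x ^ 2 := lt_of_le_of_ne (sq_nonneg x) (Ne.symm (pow_ne_zero 2 hx))
      exact (Real.rpow_pos_of_pos hx2 p).ne' h
  rw [hsupp]
  have h0 : (gaussianReal 0 1) {(0:ℝ)} = 0 :=
    gaussianReal_absolutelyContinuous 0 one_ne_zero (by simp)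
  have := measure_compl (measurableSet_singleton (0:ℝ)) (measure_ne_top (gaussianReal 0 1) _)
  rw [h0, measure_univ, tsub_zero] at this
  rw [this]
  norm_num


noncomputable def gaussTailC : ℝ := (√(2 * π))⁻¹ * Real.exp (-(1/2))

lemma gaussTailC_pos : 0 < gaussTailC := by
  have : (0:ℝ) < √(2 * π) := Real.sqrt_pos.2 (by positivity)
  unfold gaussTailC
  positivity

lemma gaussian_small_ball {a : ℝ} (ha : 0 < a) (ha1 : a ≤ 1) :
    ENNReal.ofReal (gaussTailC * √a) ≤ gaussianReal 0 1 {x : ℝ | x ^ 2 ≤ a} := by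
  have hsub : Icc (0:ℝ) (√a) ⊆ {x : ℝ | x ^ 2 ≤ a} := by
    intro x hx
    simp only [Set.mem_setOf_eq]
    calc x ^ 2 ≤ (√a) ^ 2 := pow_le_pow_left₀ hx.1 hx.2 2
      _ = a := Real.sq_sqrt ha.le
  refine le_trans ?_ (measure_mono hsub)
  rw [gaussianReal_apply 0 one_ne_zero]
  have hpt : ∀ x ∈ Icc (0:ℝ) (√a), ENNReal.ofReal gaussTailC ≤ gaussianPDF 0 1 x := by
    intro x hx
    rw [gaussianPDF]
    apply ENNReal.ofReal_le_ofReal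
    rw [gaussianPDFReal]
    unfold gaussTailC
    have hx1 : x ^ 2 ≤ 1 := by
      have h1 : x ≤ √a := hx.2
      have h2 : √a ≤ 1 := by
        rw [show (1:ℝ) = √1 by simp]
        exact Real.sqrt_le_sqrt ha1
      nlinarith [hx.1]
    have : (-(1/2) : ℝ) ≤ -(x - 0) ^ 2 / (2 * ((1:ℝ≥0) : ℝ)) := by
      push_cast
      nlinarith
    have hexp := Real.exp_le_exp.2 this
    have hs : (0:ℝ) < √(2 * π) := Real.sqrt_pos.2 (by positivity)
    calc (√(2 * π))⁻¹ * Real.exp (-(1/2))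
        ≤ (√(2 * π * ((1:ℝ≥0):ℝ)))⁻¹ * Real.exp (-(x - 0) ^ 2 / (2 * ((1:ℝ≥0):ℝ))) := by
          push_cast
          rw [mul_one]
          exact mul_le_mul_of_nonneg_left (by simpa using hexp) (by positivity)
      _ = _ := rfl
  calc ENNReal.ofReal (gaussTailC * √a)
      = ENNReal.ofReal gaussTailC * volume (Icc (0:ℝ) (√a)) := by
        rw [Real.volume_Icc, sub_zero, ← ENNReal.ofReal_mul gaussTailC_pos.le]
    _ = ∫⁻ _ in Icc (0:ℝ) (√a), ENNReal.ofReal gaussTailC := by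
        rw [setLIntegral_const]
    _ ≤ ∫⁻ x in Icc (0:ℝ) (√a), gaussianPDF 0 1 x :=
        setLIntegral_mono (measurable_gaussianPDF 0 1) hpt

lemma gaussian_tail {a : ℝ} (ha : 0 < a) (ha1 : a ≤ 1) :
    ((gaussianReal 0 1) {x : ℝ | a < x ^ 2}).toReal ≤ Real.exp (-(gaussTailC * √a)) := by
  set γ := gaussianReal 0 1
  have hsm : MeasurableSet {x : ℝ | x ^ 2 ≤ a} :=
    measurableSet_le (measurable_id.pow_const 2) measurable_const
  have hcompl : {x : ℝ | a < x ^ 2} = {x : ℝ | x ^ 2 ≤ a}ᶜ := by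
    ext x
    simp [not_le]
  have hle1 : gaussTailC * √a ≤ (γ {x : ℝ | x ^ 2 ≤ a}).toReal := by
    have h1 := gaussian_small_ball ha ha1
    have h2 : (ENNReal.ofReal (gaussTailC * √a)).toReal ≤ (γ {x : ℝ | x ^ 2 ≤ a}).toReal :=
      ENNReal.toReal_mono (measure_ne_top _ _) h1
    rwa [ENNReal.toReal_ofReal (mul_nonneg gaussTailC_pos.le (Real.sqrt_nonneg a))] at h2
  have hc := measure_compl hsm (measure_ne_top γ _)
  rw [hcompl, hc, measure_univ]
  have hle2 : (γ {x : ℝ | x ^ 2 ≤ a}) ≤ 1 := prob_le_one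
  rw [ENNReal.toReal_sub_of_le hle2 (by norm_num), ENNReal.toReal_one]
  calc 1 - (γ {x : ℝ | x ^ 2 ≤ a}).toReal ≤ 1 - gaussTailC * √a := by linarith
    _ ≤ Real.exp (-(gaussTailC * √a)) := by
        have := Real.add_one_le_exp (-(gaussTailC * √a))
        linarith

set_option maxHeartbeats 1000000

/-- Let `d > 0`. For every `ε₀ > 0` there exists `N₀` such that for every
`N ≥ N₀`: if `α_1, …, α_N` are independent standard Gaussian random variables, `ζ_i = α_i²`,
and `ζ_min = min_i ζ_i`, then `E[ζ_1^d] / E[(N ζ_min)^d] ≥ 1 / (1 + ε₀)`. -/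
theorem chiSq_min_moment_ratio (d : ℝ) (hd : 0 < d) :
    ∀ ε₀ : ℝ, 0 < ε₀ → ∃ N₀ : ℕ, ∀ N : ℕ, N₀ ≤ N → ∀ (hN : 0 < N),
      ∀ (Ω : Type) (_ : MeasurableSpace Ω) (P : Measure Ω), IsProbabilityMeasure P →
        ∀ α : Fin N → Ω → ℝ,
          iIndepFun α P →
          (∀ i, P.map (α i) = gaussianReal 0 1) →
          (∫ ω, ((α ⟨0, hN⟩ ω) ^ 2) ^ d ∂P) /
              (∫ ω, ((N : ℝ) * ⨅ i : Fin N, (α i ω) ^ 2) ^ d ∂P)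
            ≥ 1 / (1 + ε₀) := by
  intro ε₀ hε₀
  set γ := gaussianReal 0 1 with hγdef
  set c := ∫ x, (x ^ 2) ^ d ∂γ with hcdef
  have hcpos : 0 < c := gaussian_moment_pos hd
  set m := ∫ x, ((x ^ 2) ^ d) ^ 2 ∂γ with hmdef
  have hm_eq : (fun x : ℝ => ((x ^ 2) ^ d) ^ 2) = fun x : ℝ => (x ^ 2) ^ (2 * d) := by
    funext x
    rw [mul_comm, Real.rpow_mul (sq_nonneg x), ← Real.rpow_natCast ((x ^ 2) ^ d) 2]
    norm_num
  have hI2d : Integrable (fun x : ℝ => ((x ^ 2) ^ d) ^ 2) γ := by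
    rw [hm_eq]
    exact integrable_sq_rpow_gaussian (by positivity)
  have hId : Integrable (fun x : ℝ => (x ^ 2) ^ d) γ := integrable_sq_rpow_gaussian hd
  have hrpowm : Measurable (fun y : ℝ => y ^ d) :=
    (Real.continuous_rpow_const hd.le).measurable
  have hmE : Measurable (fun x : ℝ => (x ^ 2) ^ d) :=
    hrpowm.comp (measurable_id.pow_const 2)
  have hmE2 : Measurable (fun x : ℝ => ((x ^ 2) ^ d) ^ 2) := hmE.pow_const 2
  have hmnn : 0 ≤ m := integral_nonneg fun x => sq_nonneg _
  set δ := c ^ d⁻¹ with hδdef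
  have hδpos : 0 < δ := Real.rpow_pos_of_pos hcpos _
  have hδd : δ ^ d = c := Real.rpow_inv_rpow hcpos.le hd.ne'
  set b := gaussTailC * √δ / 2 with hbdef
  have hbpos : 0 < b := by
    have := gaussTailC_pos
    have : (0:ℝ) < √δ := Real.sqrt_pos.2 hδpos
    positivity
  -- the vanishing error term
  have hsqrtT : Tendsto (fun N : ℕ => √(N : ℝ)) atTop atTop := by
    rw [tendsto_atTop]
    intro x
    filter_upwards [eventually_ge_atTop (⌈x ^ 2⌉₊)] with N hN
    have hxN : (x ^ 2 : ℝ) ≤ N := le_trans (Nat.le_ceil _) (by exact_mod_cast hN)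
    calc x ≤ |x| := le_abs_self x
      _ = √(x ^ 2) := (Real.sqrt_sq_eq_abs x).symm
      _ ≤ √(N : ℝ) := Real.sqrt_le_sqrt hxN
  have hg : Tendsto (fun y : ℝ => (m + 1) / 2 * (y ^ (2 * d) * Real.exp (-b * y)))
      atTop (𝓝 0) := by
    simpa using (tendsto_rpow_mul_exp_neg_mul_atTop_nhds_zero (2 * d) b hbpos).const_mul
      ((m + 1) / 2)
  have hT : Tendsto (fun N : ℕ => (N : ℝ) ^ d * ((m + 1) / 2 * Real.exp (-(b * √(N : ℝ)))))
      atTop (𝓝 0) := by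
    refine ((hg.comp hsqrtT).congr' ?_)
    filter_upwards [eventually_ge_atTop 1] with N hN
    have hN0 : (0:ℝ) ≤ (N : ℝ) := Nat.cast_nonneg N
    have hNd : ((N : ℝ)) ^ d = (√(N : ℝ)) ^ (2 * d) := by
      have h2 : (√(N : ℝ)) ^ (2 * d) = ((√(N : ℝ)) ^ (2:ℝ)) ^ d :=
        Real.rpow_mul (Real.sqrt_nonneg _) 2 d
      rw [h2, show ((2:ℝ) = ((2:ℕ):ℝ)) by norm_num, Real.rpow_natCast, Real.sq_sqrt hN0]
    simp only [Function.comp_apply]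
    rw [hNd, neg_mul]
    ring
  obtain ⟨N₁, hN₁⟩ := eventually_atTop.1
    (hT.eventually_lt_const (by positivity : (0:ℝ) < ε₀ * c))
  refine ⟨max N₁ (⌈δ⌉₊ + 1), fun N hNge hN Ω mΩ P hP α hIndep hmap => ?_⟩
  have hNδ : δ < (N : ℝ) := by
    have h1 : ⌈δ⌉₊ + 1 ≤ N := le_trans (le_max_right _ _) hNge
    calc δ ≤ (⌈δ⌉₊ : ℝ) := Nat.le_ceil δ
      _ < (N : ℝ) := by exact_mod_cast h1
  have hN1 : N₁ ≤ N := le_trans (le_max_left _ _) hNge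
  have hNpos : (0:ℝ) < N := by exact_mod_cast hN
  -- measurable modifications
  have hAE : ∀ i, AEMeasurable (α i) P := fun i =>
    aemeasurable_of_map_neZero (by rw [hmap i]; infer_instance)
  set β : Fin N → Ω → ℝ := fun i => (hAE i).mk (α i) with hβdef
  have hβm : ∀ i, Measurable (β i) := fun i => (hAE i).measurable_mk
  have haeq : ∀ i, α i =ᵐ[P] β i := fun i => (hAE i).ae_eq_mk
  have hallae : ∀ᵐ ω ∂P, ∀ i, α i ω = β i ω := ae_all_iff.2 haeq
  have hmapβ : ∀ i, P.map (β i) = γ := fun i => by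
    rw [← Measure.map_congr (haeq i), hmap i]
  set i₀ : Fin N := ⟨0, hN⟩ with hi₀def
  haveI : Nonempty (Fin N) := ⟨i₀⟩
  set a := δ / (N : ℝ) with hadef
  have hapos : 0 < a := div_pos hδpos hNpos
  have ha1 : a ≤ 1 := by
    rw [hadef, div_le_one hNpos]
    exact hNδ.le
  set t : Set ℝ := {x | a < x ^ 2} with htdef
  have htm : MeasurableSet t := measurableSet_lt measurable_const (measurable_id.pow_const 2)
  set q := (γ t).toReal with hqdef
  have hqnn : 0 ≤ q := ENNReal.toReal_nonneg
  have hqle : q ≤ Real.exp (-(gaussTailC * √a)) := gaussian_tail hapos ha1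
  -- the event A
  set A := ⋂ i, (β i) ⁻¹' t with hAdef
  have hAm : MeasurableSet A := MeasurableSet.iInter fun i => (hβm i) htm
  have hPA : (P A).toReal = q ^ N := by
    have h1 : P A = P (⋂ i, (α i) ⁻¹' t) := by
      refine (measure_congr ?_).symm
      apply eventuallyEq_set.2
      filter_upwards [hallae] with ω hω
      have h9 : (∀ i, α i ω ∈ t) ↔ (∀ i, β i ω ∈ t) := forall_congr' fun i => by rw [hω i]
      simpa only [hAdef, eq_iff_iff, Set.mem_iInter, Set.mem_preimage] using h9
    have h2 : P (⋂ i, (α i) ⁻¹' t) = ∏ i : Fin N, P ((α i) ⁻¹' t) :=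
      hIndep.meas_iInter fun i => ⟨t, htm, rfl⟩
    have h3 : ∀ i : Fin N, P ((α i) ⁻¹' t) = γ t := fun i => by
      rw [← hmap i, Measure.map_apply_of_aemeasurable (hAE i) htm]
    rw [h1, h2]
    simp only [h3]
    rw [Finset.prod_const, Finset.card_univ, Fintype.card_fin, ENNReal.toReal_pow]
  -- preliminary pointwise facts
  set Z : Ω → ℝ := fun ω => (N : ℝ) * ⨅ i, (β i ω) ^ 2 with hZdef
  have hbdd : ∀ ω, BddBelow (Set.range fun i : Fin N => (β i ω) ^ 2) := fun ω =>
    ⟨0, by rintro y ⟨i, rfl⟩; positivity⟩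
  have hZnn : ∀ ω, 0 ≤ Z ω := fun ω =>
    mul_nonneg hNpos.le (le_ciInf fun i => sq_nonneg _)
  have hZle : ∀ ω, Z ω ≤ (N : ℝ) * (β i₀ ω) ^ 2 := fun ω =>
    mul_le_mul_of_nonneg_left (ciInf_le (hbdd ω) i₀) hNpos.le
  have hZm : Measurable Z :=
    (Measurable.iInf fun i => (hβm i).pow_const 2).const_mul _
  set lam := Real.exp (-(b * √(N : ℝ))) with hlamdef
  have hlampos : 0 < lam := Real.exp_pos _
  set C₁ := (N : ℝ) ^ d * (lam / 2) with hC₁def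
  set C₂ := (N : ℝ) ^ d * (1 / (2 * lam)) with hC₂def
  have hC₁nn : 0 ≤ C₁ := by positivity
  have hC₂nn : 0 ≤ C₂ := by positivity
  -- key pointwise bound
  have hkey : ∀ ω, (Z ω) ^ d ≤ δ ^ d + (C₁ * (((β i₀ ω) ^ 2) ^ d) ^ 2
      + C₂ * A.indicator (fun _ => (1:ℝ)) ω) := by
    intro ω
    have hδd0 : (0:ℝ) ≤ δ ^ d := Real.rpow_nonneg hδpos.le d
    have hy0 : 0 ≤ ((β i₀ ω) ^ 2) ^ d := Real.rpow_nonneg (sq_nonneg _) d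
    rcases le_or_gt (⨅ i, (β i ω) ^ 2) a with hle | hlt
    · have h1 : Z ω ≤ δ := by
        calc Z ω ≤ (N : ℝ) * a := mul_le_mul_of_nonneg_left hle hNpos.le
          _ = δ := by
            rw [hadef]
            field_simp
      have h2 : (Z ω) ^ d ≤ δ ^ d := Real.rpow_le_rpow (hZnn ω) h1 hd.le
      have h3 : 0 ≤ A.indicator (fun _ => (1:ℝ)) ω :=
        Set.indicator_nonneg (fun _ _ => zero_le_one) ω
      have h4 := mul_nonneg hC₁nn (sq_nonneg (((β i₀ ω) ^ 2) ^ d))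
      have h5 := mul_nonneg hC₂nn h3
      linarith
    · have hmem : ω ∈ A := Set.mem_iInter.2 fun i =>
        (lt_of_lt_of_le hlt (ciInf_le (hbdd ω) i) : a < (β i ω) ^ 2)
      have hind : A.indicator (fun _ => (1:ℝ)) ω = 1 := Set.indicator_of_mem hmem _
      set y := ((β i₀ ω) ^ 2) ^ d with hydef
      have h2 : (Z ω) ^ d ≤ (N : ℝ) ^ d * y := by
        calc (Z ω) ^ d ≤ ((N : ℝ) * (β i₀ ω) ^ 2) ^ d :=
              Real.rpow_le_rpow (hZnn ω) (hZle ω) hd.le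
          _ = (N : ℝ) ^ d * y := by rw [Real.mul_rpow hNpos.le (sq_nonneg _)]
      have hNd0 : (0:ℝ) ≤ (N : ℝ) ^ d := Real.rpow_nonneg hNpos.le d
      have hAM : y ≤ lam / 2 * y ^ 2 + 1 / (2 * lam) := by
        have h5 : 2 * lam * y ≤ lam ^ 2 * y ^ 2 + 1 := by nlinarith [sq_nonneg (lam * y - 1)]
        have h6 : y = 2 * lam * y / (2 * lam) := by field_simp
        rw [h6, div_le_iff₀ (by positivity : (0:ℝ) < 2 * lam)]
        calc 2 * lam * y ≤ lam ^ 2 * y ^ 2 + 1 := h5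
          _ = (lam / 2 * (2 * lam * y / (2 * lam)) ^ 2 + 1 / (2 * lam)) * (2 * lam) := by
              field_simp
      have h4 := mul_le_mul_of_nonneg_left hAM hNd0
      have h7 : (N : ℝ) ^ d * (lam / 2 * y ^ 2 + 1 / (2 * lam))
          = C₁ * y ^ 2 + C₂ * 1 := by
        rw [hC₁def, hC₂def]
        ring
      rw [hind]
      linarith
  -- integrability
  have hYint : Integrable (fun ω => ((β i₀ ω) ^ 2) ^ d) P := by
    refine (integrable_map_measure hmE.aestronglyMeasurable (hβm i₀).aemeasurable).mp ?_
    rw [hmapβ i₀]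
    exact hId
  have hY2int : Integrable (fun ω => (((β i₀ ω) ^ 2) ^ d) ^ 2) P := by
    refine (integrable_map_measure hmE2.aestronglyMeasurable (hβm i₀).aemeasurable).mp ?_
    rw [hmapβ i₀]
    exact hI2d
  have hindint : Integrable (A.indicator fun _ => (1:ℝ)) P :=
    (integrable_const (1:ℝ)).indicator hAm
  have hZdint : Integrable (fun ω => (Z ω) ^ d) P := by
    refine Integrable.mono' (hYint.const_mul ((N : ℝ) ^ d))
      ((hrpowm.comp hZm).aestronglyMeasurable) ?_
    filter_upwards with ω
    rw [Real.norm_eq_abs, abs_of_nonneg (Real.rpow_nonneg (hZnn ω) d)]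
    calc (Z ω) ^ d ≤ ((N : ℝ) * (β i₀ ω) ^ 2) ^ d :=
          Real.rpow_le_rpow (hZnn ω) (hZle ω) hd.le
      _ = (N : ℝ) ^ d * ((β i₀ ω) ^ 2) ^ d := Real.mul_rpow hNpos.le (sq_nonneg _)
  -- value of integrals via the map
  have hnumβ : ∫ ω, ((β i₀ ω) ^ 2) ^ d ∂P = c := by
    rw [hcdef, ← hmapβ i₀, integral_map (hβm i₀).aemeasurable hmE.aestronglyMeasurable]
  have hmβ : ∫ ω, (((β i₀ ω) ^ 2) ^ d) ^ 2 ∂P = m := by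
    rw [hmdef, ← hmapβ i₀, integral_map (hβm i₀).aemeasurable hmE2.aestronglyMeasurable]
  -- numerator equals c
  have hnum : (∫ ω, ((α i₀ ω) ^ 2) ^ d ∂P) = c := by
    rw [← hnumβ]
    apply integral_congr_ae
    filter_upwards [haeq i₀] with ω hω
    rw [hω]
  -- denominator
  have hden : (∫ ω, ((N : ℝ) * ⨅ i, (α i ω) ^ 2) ^ d ∂P) = ∫ ω, (Z ω) ^ d ∂P := by
    apply integral_congr_ae
    filter_upwards [hallae] with ω hω
    have : (⨅ i, (α i ω) ^ 2) = ⨅ i, (β i ω) ^ 2 := by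
      apply iInf_congr
      intro i
      rw [hω i]
    rw [this]
  -- integrate the key bound
  have hint : ∫ ω, (Z ω) ^ d ∂P ≤ δ ^ d + (C₁ * m + C₂ * (q ^ N)) := by
    have hRHSint : Integrable (fun ω => δ ^ d + (C₁ * (((β i₀ ω) ^ 2) ^ d) ^ 2
        + C₂ * A.indicator (fun _ => (1:ℝ)) ω)) P :=
      (integrable_const _).add ((hY2int.const_mul _).add (hindint.const_mul _))
    calc ∫ ω, (Z ω) ^ d ∂P
        ≤ ∫ ω, (δ ^ d + (C₁ * (((β i₀ ω) ^ 2) ^ d) ^ 2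
            + C₂ * A.indicator (fun _ => (1:ℝ)) ω)) ∂P :=
          integral_mono hZdint hRHSint hkey
      _ = δ ^ d + (C₁ * m + C₂ * (q ^ N)) := by
          have hg1 : Integrable (fun ω => C₁ * (((β i₀ ω) ^ 2) ^ d) ^ 2
              + C₂ * A.indicator (fun _ => (1:ℝ)) ω) P :=
            (hY2int.const_mul _).add (hindint.const_mul _)
          rw [integral_add (integrable_const _) hg1,
            integral_add (hY2int.const_mul C₁) (hindint.const_mul C₂),
            integral_const_mul, integral_const_mul, hmβ, integral_indicator_const _ hAm,
            integral_const]
          simp [measureReal_def, hPA]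
  -- estimate the error term
  have hq2b : q ^ N ≤ Real.exp (-(2 * b * √(N : ℝ))) := by
    have h1 : q ^ N ≤ (Real.exp (-(gaussTailC * √a))) ^ N := pow_le_pow_left₀ hqnn hqle N
    have h2 : (Real.exp (-(gaussTailC * √a))) ^ N = Real.exp ((N : ℝ) * -(gaussTailC * √a)) := by
      rw [← Real.exp_nat_mul]
    have hds : (N : ℝ) / √(N : ℝ) = √(N : ℝ) := Real.div_sqrt
    have h3 : (N : ℝ) * -(gaussTailC * √a) = -(2 * b * √(N : ℝ)) := by
      rw [hadef, Real.sqrt_div hδpos.le, hbdef]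
      calc (N : ℝ) * -(gaussTailC * (√δ / √(N:ℝ)))
          = -(gaussTailC * √δ * ((N:ℝ) / √(N:ℝ))) := by ring
        _ = -(gaussTailC * √δ * √(N:ℝ)) := by rw [hds]
        _ = -(2 * (gaussTailC * √δ / 2) * √(N:ℝ)) := by ring
    calc q ^ N ≤ (Real.exp (-(gaussTailC * √a))) ^ N := h1
      _ = Real.exp ((N : ℝ) * -(gaussTailC * √a)) := (Real.exp_nat_mul _ N).symm
      _ = Real.exp (-(2 * b * √(N : ℝ))) := by rw [h3]
  -- error term estimate
  have hE2 : Real.exp (-(2 * b * √(N : ℝ))) = lam ^ 2 := by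
    rw [hlamdef, sq, ← Real.exp_add]
    ring_nf
  have herr : C₁ * m + C₂ * q ^ N ≤ (N : ℝ) ^ d * ((m + 1) / 2 * Real.exp (-(b * √(N : ℝ)))) := by
    have h6 : C₂ * q ^ N ≤ (N : ℝ) ^ d * (lam / 2) := by
      calc C₂ * q ^ N ≤ C₂ * lam ^ 2 :=
            mul_le_mul_of_nonneg_left (hq2b.trans_eq hE2) hC₂nn
        _ = (N : ℝ) ^ d * (lam / 2) := by
            rw [hC₂def]
            field_simp
    have h7 : C₁ * m ≤ (N : ℝ) ^ d * (lam / 2) * m := le_of_eq (by rw [hC₁def])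
    calc C₁ * m + C₂ * q ^ N ≤ (N : ℝ) ^ d * (lam / 2) * m + (N : ℝ) ^ d * (lam / 2) := by
          linarith
      _ = (N : ℝ) ^ d * ((m + 1) / 2 * lam) := by ring
      _ = (N : ℝ) ^ d * ((m + 1) / 2 * Real.exp (-(b * √(N : ℝ)))) := by rw [hlamdef]
  have hDle : ∫ ω, (Z ω) ^ d ∂P ≤ (1 + ε₀) * c := by
    have hlt := hN₁ N hN1
    calc ∫ ω, (Z ω) ^ d ∂P ≤ δ ^ d + (C₁ * m + C₂ * q ^ N) := hint
      _ ≤ c + (N : ℝ) ^ d * ((m + 1) / 2 * Real.exp (-(b * √(N : ℝ)))) := by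
          rw [← hδd]
          linarith
      _ ≤ c + ε₀ * c := by linarith
      _ = (1 + ε₀) * c := by ring
  -- positivity of the denominator
  have hβne : ∀ i : Fin N, ∀ᵐ ω ∂P, β i ω ≠ 0 := by
    intro i
    have h0 : P ((β i) ⁻¹' {0}) = 0 := by
      have hmapp : P.map (β i) {(0:ℝ)} = P ((β i) ⁻¹' {0}) :=
        Measure.map_apply (hβm i) (measurableSet_singleton (0:ℝ))
      rw [hmapβ i] at hmapp
      rw [← hmapp]
      exact gaussianReal_absolutelyContinuous 0 one_ne_zero (by simp)
    rw [ae_iff]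
    have hset : {ω | ¬ β i ω ≠ 0} = (β i) ⁻¹' {0} := by
      ext ω
      simp
    rw [hset]
    exact h0
  have hallne : ∀ᵐ ω ∂P, ∀ i, β i ω ≠ 0 := ae_all_iff.2 hβne
  have hDpos : 0 < ∫ ω, (Z ω) ^ d ∂P := by
    rw [integral_pos_iff_support_of_nonneg_ae
      (Filter.Eventually.of_forall fun ω => Real.rpow_nonneg (hZnn ω) d) hZdint]
    have hsup : ∀ᵐ ω ∂P, ω ∈ Function.support (fun ω => (Z ω) ^ d) := by
      filter_upwards [hallne] with ω hω
      obtain ⟨j, hj⟩ := Finite.exists_min (fun i : Fin N => (β i ω) ^ 2)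
      have hinf : (⨅ i, (β i ω) ^ 2) = (β j ω) ^ 2 :=
        le_antisymm (ciInf_le (hbdd ω) j) (le_ciInf hj)
      have hZpos : 0 < Z ω := mul_pos hNpos (by
        rw [hinf]
        exact lt_of_le_of_ne (sq_nonneg _) (Ne.symm (pow_ne_zero 2 (hω j))))
      exact Function.mem_support.2 (Real.rpow_pos_of_pos hZpos d).ne'
    have h7 : P (Function.support fun ω => (Z ω) ^ d)ᶜ = 0 := by
      rw [Set.compl_def]
      exact ae_iff.1 hsup
    have h8 : P Set.univ ≤ P (Function.support fun ω => (Z ω) ^ d)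
        + P (Function.support fun ω => (Z ω) ^ d)ᶜ := by
      rw [← Set.union_compl_self (Function.support fun ω => (Z ω) ^ d)]
      exact measure_union_le _ _
    rw [h7, add_zero, measure_univ] at h8
    exact lt_of_lt_of_le (by norm_num : (0:ℝ≥0∞) < 1) h8
  -- conclusion
  rw [ge_iff_le, hnum, hden, div_le_div_iff₀ (by linarith) hDpos]
  nlinarith [hDle, hDpos, hcpos]
end

section
/- Let p > 0 and q > 0 be real numbers. Then there exists a real constant α such that ∫_0^φ ∫_0^φ sgn(y − x) e^{−x/2} e^{−y/2} x^{p−1} y^{q−1} (φ − x)(φ − y) dx dy = α φ^{p+q+2} + o(φ^{p+q+2}) as φ → 0⁺. -/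
open Filter MeasureTheory

/-- `sgn t` is `1` for `t ≥ 0` and `-1` for `t < 0`. -/
noncomputable def sgn (t : ℝ) : ℝ := if 0 ≤ t then 1 else -1

namespace SgnAux

open Set

lemma abs_sgn_le (t : ℝ) : |sgn t| ≤ 1 := by
  unfold sgn; split <;> norm_num

lemma sgn_scale {c : ℝ} (hc : 0 < c) (v u : ℝ) : sgn (c * v - c * u) = sgn (v - u) := by
  have h : 0 ≤ c * v - c * u ↔ 0 ≤ v - u := by
    rw [show c * v - c * u = c * (v - u) by ring]
    exact mul_nonneg_iff_of_pos_left hc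
  unfold sgn
  exact if_congr h rfl rfl

lemma meas_sgn : Measurable (fun z : ℝ × ℝ => sgn (z.1 - z.2)) := by
  unfold sgn
  exact Measurable.ite (measurableSet_le measurable_const
    (measurable_fst.sub measurable_snd)) measurable_const measurable_const

/-- scaling of a set integral -/
lemma scale (g : ℝ → ℝ) {φ : ℝ} (hφ : 0 < φ) :
    ∫ x in Set.Icc (0:ℝ) φ, g x = φ * ∫ u in Set.Ioc (0:ℝ) 1, g (φ * u) := by
  rw [MeasureTheory.integral_Icc_eq_integral_Ioc,
      ← intervalIntegral.integral_of_le hφ.le,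
      ← intervalIntegral.integral_of_le (zero_le_one (α := ℝ)),
      intervalIntegral.integral_comp_mul_left g hφ.ne']
  simp [smul_eq_mul, ← mul_assoc, mul_inv_cancel₀ hφ.ne']

lemma rpow_integrableOn {r : ℝ} (hr : 0 < r) :
    IntegrableOn (fun x : ℝ => x ^ (r - 1)) (Set.Ioc (0:ℝ) 1) := by
  have h := _root_.intervalIntegral.intervalIntegrable_rpow' (r := r - 1) (a := 0) (b := 1) (by linarith)
  exact (intervalIntegrable_iff_integrableOn_Ioc_of_le zero_le_one).mp h

lemma rpow_integral {r : ℝ} (hr : 0 < r) :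
    ∫ x in Set.Ioc (0:ℝ) 1, x ^ (r - 1) = 1 / r := by
  rw [← intervalIntegral.integral_of_le (zero_le_one (α := ℝ))]
  rw [show (∫ x in (0:ℝ)..1, x ^ (r-1)) = (1 ^ (r-1+1) - 0 ^ (r-1+1)) / (r-1+1) from
    integral_rpow (Or.inl (by linarith : (-1:ℝ) < r - 1))]
  rw [show r - 1 + 1 = r by ring, Real.zero_rpow hr.ne', Real.one_rpow]
  ring

noncomputable def K (p q φ : ℝ) : ℝ :=
  ∫ v in Set.Ioc (0:ℝ) 1, (Real.exp (-(φ*v)/2) * v^(q-1) * (1-v)) *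
    ∫ u in Set.Ioc (0:ℝ) 1, sgn (v-u) * Real.exp (-(φ*u)/2) * u^(p-1) * (1-u)

noncomputable def F (p q φ : ℝ) (z : ℝ × ℝ) : ℝ :=
  (Real.exp (-(φ*z.1)/2) * z.1^(q-1) * (1-z.1)) *
    (sgn (z.1-z.2) * Real.exp (-(φ*z.2)/2) * z.2^(p-1) * (1-z.2))

noncomputable abbrev μ1 : Measure ℝ := volume.restrict (Set.Ioc (0:ℝ) 1)

lemma hAmem : ∀ᵐ z ∂(μ1.prod μ1), z.1 ∈ Set.Ioc (0:ℝ) 1 ∧ z.2 ∈ Set.Ioc (0:ℝ) 1 := by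
  unfold μ1
  rw [Measure.prod_restrict]
  filter_upwards [ae_restrict_mem (measurableSet_Ioc.prod measurableSet_Ioc)] with z hz
  exact ⟨hz.1, hz.2⟩

lemma F_integrable (p q : ℝ) (hp : 0 < p) (hq : 0 < q) {φ : ℝ} (hφ : 0 ≤ φ) :
    Integrable (F p q φ) (μ1.prod μ1) := by
  have hg : Integrable (fun z : ℝ × ℝ => z.1 ^ (q-1) * z.2 ^ (p-1)) (μ1.prod μ1) :=
    Integrable.mul_prod (rpow_integrableOn hq) (rpow_integrableOn hp)
  have m1 : Measurable fun z : ℝ × ℝ => Real.exp (-(φ*z.1)/2) :=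
    Real.measurable_exp.comp ((measurable_fst.const_mul φ).neg.div_const 2)
  have m2 : Measurable fun z : ℝ × ℝ => Real.exp (-(φ*z.2)/2) :=
    Real.measurable_exp.comp ((measurable_snd.const_mul φ).neg.div_const 2)
  have hfm : AEStronglyMeasurable
      (fun z : ℝ × ℝ => Real.exp (-(φ*z.1)/2) * (1-z.1) * sgn (z.1-z.2) *
        Real.exp (-(φ*z.2)/2) * (1-z.2)) (μ1.prod μ1) :=
    ((((m1.mul (measurable_const.sub measurable_fst)).mul meas_sgn).mul m2).mul
      (measurable_const.sub measurable_snd)).aestronglyMeasurable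
  have hbound : ∀ᵐ z ∂(μ1.prod μ1),
      ‖Real.exp (-(φ*z.1)/2) * (1-z.1) * sgn (z.1-z.2) *
        Real.exp (-(φ*z.2)/2) * (1-z.2)‖ ≤ 1 := by
    filter_upwards [hAmem] with z hz
    obtain ⟨⟨h1, h2⟩, ⟨h3, h4⟩⟩ := hz
    rw [Real.norm_eq_abs, abs_mul, abs_mul, abs_mul, abs_mul]
    have e1 : |Real.exp (-(φ*z.1)/2)| ≤ 1 := by
      rw [abs_of_nonneg (Real.exp_nonneg _)]
      exact Real.exp_le_one_iff.mpr (by nlinarith)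
    have e2 : |Real.exp (-(φ*z.2)/2)| ≤ 1 := by
      rw [abs_of_nonneg (Real.exp_nonneg _)]
      exact Real.exp_le_one_iff.mpr (by nlinarith)
    have e3 : |1 - z.1| ≤ 1 := abs_le.mpr ⟨by linarith, by linarith⟩
    have e4 : |1 - z.2| ≤ 1 := abs_le.mpr ⟨by linarith, by linarith⟩
    have e5 := abs_sgn_le (z.1 - z.2)
    calc |Real.exp (-(φ*z.1)/2)| * |1-z.1| * |sgn (z.1-z.2)| * |Real.exp (-(φ*z.2)/2)| * |1-z.2|
        ≤ 1 * 1 * 1 * 1 * 1 := by gcongr <;> positivity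
      _ = 1 := by norm_num
  have := hg.bdd_mul hfm hbound
  exact this.congr (Eventually.of_forall fun z => by simp only [F]; ring)

lemma K_eq_prod (p q : ℝ) (hp : 0 < p) (hq : 0 < q) {φ : ℝ} (hφ : 0 ≤ φ) :
    K p q φ = ∫ z, F p q φ z ∂(μ1.prod μ1) := by
  have h1 : ∀ v : ℝ, ((Real.exp (-(φ*v)/2) * v^(q-1) * (1-v)) *
      ∫ u in Set.Ioc (0:ℝ) 1, sgn (v-u) * Real.exp (-(φ*u)/2) * u^(p-1) * (1-u))
      = ∫ u, F p q φ (v, u) ∂μ1 := by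
    intro v
    rw [← integral_const_mul]
    rfl
  have h2 : K p q φ = ∫ v, ∫ u, F p q φ (v, u) ∂μ1 ∂μ1 := by
    unfold K μ1
    exact integral_congr_ae (Eventually.of_forall h1)
  rw [h2]
  exact integral_integral (F_integrable p q hp hq hφ)

lemma K_diff_bound (p q : ℝ) (hp : 0 < p) (hq : 0 < q) {φ : ℝ} (hφ : 0 ≤ φ) :
    |K p q φ - K p q 0| ≤ φ * (1/q * 1/p) := by
  have hintφ := F_integrable p q hp hq hφ
  have hint0 := F_integrable p q hp hq (le_refl 0)
  rw [K_eq_prod p q hp hq hφ, K_eq_prod p q hp hq (le_refl 0),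
      ← integral_sub hintφ hint0]
  have hb : Integrable (fun z : ℝ × ℝ => (φ * z.1 ^ (q-1)) * z.2 ^ (p-1)) (μ1.prod μ1) :=
    Integrable.mul_prod ((rpow_integrableOn hq).const_mul φ) (rpow_integrableOn hp)
  calc |∫ z, (F p q φ z - F p q 0 z) ∂(μ1.prod μ1)|
      ≤ ∫ z, ‖F p q φ z - F p q 0 z‖ ∂(μ1.prod μ1) := by
        rw [← Real.norm_eq_abs]; exact norm_integral_le_integral_norm _
    _ ≤ ∫ z, (φ * z.1 ^ (q-1)) * z.2 ^ (p-1) ∂(μ1.prod μ1) := by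
        apply integral_mono_ae (hintφ.sub hint0).norm hb
        filter_upwards [hAmem] with z hz
        obtain ⟨⟨h1, h2⟩, ⟨h3, h4⟩⟩ := hz
        simp only [Pi.sub_apply, Real.norm_eq_abs]
        have key : F p q φ z - F p q 0 z = (z.1^(q-1) * z.2^(p-1)) *
            ((1-z.1) * sgn (z.1-z.2) * (1-z.2) *
              (Real.exp (-(φ*z.1)/2) * Real.exp (-(φ*z.2)/2) - 1)) := by
          simp only [F, zero_mul, neg_zero, zero_div, Real.exp_zero]
          ring
        rw [key, abs_mul]
        have hED : |Real.exp (-(φ*z.1)/2) * Real.exp (-(φ*z.2)/2) - 1| ≤ φ := by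
          rw [← Real.exp_add]
          have ht0 : Real.exp (-(φ*z.1)/2 + -(φ*z.2)/2) ≤ 1 :=
            Real.exp_le_one_iff.mpr (by nlinarith)
          have ht1 := Real.add_one_le_exp (-(φ*z.1)/2 + -(φ*z.2)/2)
          have habs : |Real.exp (-(φ*z.1)/2 + -(φ*z.2)/2) - 1|
              = 1 - Real.exp (-(φ*z.1)/2 + -(φ*z.2)/2) := by
            rw [abs_sub_comm, abs_of_nonneg (by linarith)]
          rw [habs]
          nlinarith
        have hB : |(1-z.1) * sgn (z.1-z.2) * (1-z.2) *
            (Real.exp (-(φ*z.1)/2) * Real.exp (-(φ*z.2)/2) - 1)| ≤ φ := by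
          rw [abs_mul, abs_mul, abs_mul]
          have e3 : |1 - z.1| ≤ 1 := abs_le.mpr ⟨by linarith, by linarith⟩
          have e4 : |1 - z.2| ≤ 1 := abs_le.mpr ⟨by linarith, by linarith⟩
          have e5 := abs_sgn_le (z.1 - z.2)
          calc |1-z.1| * |sgn (z.1-z.2)| * |1-z.2| *
              |Real.exp (-(φ*z.1)/2) * Real.exp (-(φ*z.2)/2) - 1|
              ≤ 1 * 1 * 1 * φ := by gcongr <;> positivity
            _ = φ := by ring
        have hA : |z.1^(q-1) * z.2^(p-1)| = z.1^(q-1) * z.2^(p-1) :=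
          abs_of_nonneg (by positivity)
        rw [hA]
        calc z.1^(q-1) * z.2^(p-1) * |(1-z.1) * sgn (z.1-z.2) * (1-z.2) *
              (Real.exp (-(φ*z.1)/2) * Real.exp (-(φ*z.2)/2) - 1)|
            ≤ z.1^(q-1) * z.2^(p-1) * φ :=
              mul_le_mul_of_nonneg_left hB (by positivity)
          _ = (φ * z.1 ^ (q-1)) * z.2 ^ (p-1) := by ring
    _ = (∫ v, φ * v ^ (q-1) ∂μ1) * (∫ u, u ^ (p-1) ∂μ1) :=
        integral_prod_mul (fun v : ℝ => φ * v ^ (q-1)) (fun u : ℝ => u ^ (p-1))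
    _ = φ * (1/q * 1/p) := by
        unfold μ1
        rw [integral_const_mul, rpow_integral hq, rpow_integral hp]
        ring

lemma main_eq (p q : ℝ) (hp : 0 < p) (hq : 0 < q) {φ : ℝ} (hφ : 0 < φ) :
    (∫ y in Set.Icc (0 : ℝ) φ, ∫ x in Set.Icc (0 : ℝ) φ,
        sgn (y - x) * Real.exp (-x / 2) * Real.exp (-y / 2)
          * x ^ (p - 1) * y ^ (q - 1) * (φ - x) * (φ - y))
      = φ ^ (p + q + 2) * K p q φ := by
  have inner : ∀ y : ℝ, (∫ x in Set.Icc (0:ℝ) φ,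
      sgn (y - x) * Real.exp (-x / 2) * Real.exp (-y / 2)
        * x ^ (p - 1) * y ^ (q - 1) * (φ - x) * (φ - y))
      = (φ^(p-1) * (φ*φ)) * ((Real.exp (-y/2) * y^(q-1) * (φ-y)) *
          ∫ u in Set.Ioc (0:ℝ) 1,
            sgn (y - φ*u) * Real.exp (-(φ*u)/2) * u^(p-1) * (1-u)) := by
    intro y
    rw [scale (fun x => sgn (y - x) * Real.exp (-x / 2) * Real.exp (-y / 2)
        * x ^ (p - 1) * y ^ (q - 1) * (φ - x) * (φ - y)) hφ]
    have hc : Set.EqOn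
        (fun u : ℝ => (fun x => sgn (y - x) * Real.exp (-x / 2) * Real.exp (-y / 2)
          * x ^ (p - 1) * y ^ (q - 1) * (φ - x) * (φ - y)) (φ * u))
        (fun u : ℝ => (φ^(p-1) * (φ * (Real.exp (-y/2) * y^(q-1) * (φ-y)))) *
          (sgn (y - φ*u) * Real.exp (-(φ*u)/2) * u^(p-1) * (1-u)))
        (Set.Ioc 0 1) := by
      intro u hu
      simp only
      rw [Real.mul_rpow hφ.le hu.1.le]
      ring
    rw [setIntegral_congr_fun measurableSet_Ioc hc, integral_const_mul]
    ring
  simp only [inner]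
  rw [scale (fun y => (φ^(p-1) * (φ*φ)) * ((Real.exp (-y/2) * y^(q-1) * (φ-y)) *
      ∫ u in Set.Ioc (0:ℝ) 1,
        sgn (y - φ*u) * Real.exp (-(φ*u)/2) * u^(p-1) * (1-u))) hφ]
  have hc2 : Set.EqOn
      (fun v : ℝ => (fun y => (φ^(p-1) * (φ*φ)) * ((Real.exp (-y/2) * y^(q-1) * (φ-y)) *
        ∫ u in Set.Ioc (0:ℝ) 1,
          sgn (y - φ*u) * Real.exp (-(φ*u)/2) * u^(p-1) * (1-u))) (φ * v))
      (fun v : ℝ => (φ^(p-1) * φ^(q-1) * (φ*φ*φ)) *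
        ((Real.exp (-(φ*v)/2) * v^(q-1) * (1-v)) *
          ∫ u in Set.Ioc (0:ℝ) 1,
            sgn (v - u) * Real.exp (-(φ*u)/2) * u^(p-1) * (1-u)))
      (Set.Ioc 0 1) := by
    intro v hv
    simp only
    rw [Real.mul_rpow hφ.le hv.1.le]
    have hs : (∫ u in Set.Ioc (0:ℝ) 1,
        sgn (φ*v - φ*u) * Real.exp (-(φ*u)/2) * u^(p-1) * (1-u))
        = ∫ u in Set.Ioc (0:ℝ) 1,
            sgn (v - u) * Real.exp (-(φ*u)/2) * u^(p-1) * (1-u) := by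
      apply setIntegral_congr_fun measurableSet_Ioc
      intro u hu
      simp only
      rw [sgn_scale hφ]
    rw [hs]
    ring
  rw [setIntegral_congr_fun measurableSet_Ioc hc2, integral_const_mul]
  have hpow : φ ^ (p + q + 2) = φ^(p-1) * φ^(q-1) * (φ*φ*φ*φ) := by
    rw [show p + q + 2 = (p-1) + ((q-1) + 4) by ring, Real.rpow_add hφ, Real.rpow_add hφ,
        show (4:ℝ) = ((4:ℕ):ℝ) by norm_num, Real.rpow_natCast]
    ring
  rw [hpow]
  unfold K
  ring

end SgnAux

/-- Let `p, q > 0`. Then there is a real constant `α` such that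
`∫_0^φ ∫_0^φ sgn(y-x) e^{-x/2} e^{-y/2} x^{p-1} y^{q-1} (φ-x)(φ-y) dx dy
  = α φ^{p+q+2} + o(φ^{p+q+2})` as `φ → 0⁺`. -/
theorem double_integral_sgn_asymptotic (p q : ℝ) (hp : 0 < p) (hq : 0 < q) :
    ∃ α : ℝ, Tendsto (fun φ : ℝ =>
        ((∫ y in Set.Icc (0 : ℝ) φ, ∫ x in Set.Icc (0 : ℝ) φ,
            sgn (y - x) * Real.exp (-x / 2) * Real.exp (-y / 2)
              * x ^ (p - 1) * y ^ (q - 1) * (φ - x) * (φ - y))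
          - α * φ ^ (p + q + 2)) / φ ^ (p + q + 2))
      (nhdsWithin 0 (Set.Ioi 0)) (nhds 0) := by
  refine ⟨SgnAux.K p q 0, ?_⟩
  apply squeeze_zero_norm' (a := fun φ : ℝ => φ * (1/q * 1/p))
  · filter_upwards [self_mem_nhdsWithin] with φ hφ
    have hφ' : (0:ℝ) < φ := hφ
    rw [SgnAux.main_eq p q hp hq hφ']
    have hne : φ ^ (p+q+2) ≠ 0 := (Real.rpow_pos_of_pos hφ' _).ne'
    have hdiv : (φ ^ (p+q+2) * SgnAux.K p q φ - SgnAux.K p q 0 * φ ^ (p+q+2)) / φ ^ (p+q+2)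
        = SgnAux.K p q φ - SgnAux.K p q 0 := by
      field_simp
    rw [hdiv, Real.norm_eq_abs]
    exact SgnAux.K_diff_bound p q hp hq hφ'.le
  · have h0 : Tendsto (fun φ : ℝ => φ * (1/q * 1/p)) (nhds 0) (nhds 0) := by
      simpa using (tendsto_id.mul_const (1/q * 1/p) :
        Tendsto (fun φ : ℝ => φ * (1/q * 1/p)) (nhds 0) (nhds (0 * (1/q * 1/p))))
    exact h0.mono_left nhdsWithin_le_nhds
end

section
/- Let a > 0 be a real number and let ℓ be a positive integer. Then ∫_0^∞ ∫_0^∞ sgn(y − x) e^{−x/2} x^{a−1} e^{−y/2} y^{a+ℓ−1} dx dy = 2^{2a+ℓ+1} Γ(a) Γ(a+ℓ) Σ_{k=1}^{ℓ} 2^{−(2a+ℓ−k)} Γ(2a+ℓ−k) / (Γ(a) Γ(a+ℓ−k+1)). -/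
open Filter MeasureTheory Finset

namespace SgnGammaAux

open Set Real Topology

noncomputable def f (c : ℝ) (x : ℝ) : ℝ := Real.exp (-x / 2) * x ^ (c - 1)

lemma intF {c : ℝ} (hc : 0 < c) : IntegrableOn (f c) (Set.Ioi 0) := by
  have h := integrableOn_rpow_mul_exp_neg_mul_rpow (p := 1) (s := c - 1) (b := 1/2)
    (by linarith) one_pos one_half_pos
  refine h.congr_fun (fun x hx => ?_) measurableSet_Ioi
  simp only [f, Real.rpow_one]; ring_nf

noncomputable def Phi (a : ℝ) (y : ℝ) : ℝ := ∫ x in Set.Ioi y, f a x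

lemma f_nonneg {c x : ℝ} (hx : 0 ≤ x) : 0 ≤ f c x :=
  mul_nonneg (Real.exp_pos _).le (Real.rpow_nonneg hx _)

lemma f_contOn {c : ℝ} : ContinuousOn (f c) (Set.Ioi 0) := by
  intro x hx
  exact ((Real.continuous_exp.comp (by continuity)).continuousAt.mul
    (Real.continuousAt_rpow_const x (c-1) (Or.inl (ne_of_gt hx)))).continuousWithinAt

lemma Phi_eq (a : ℝ) (ha : 0 < a) {y : ℝ} (hy : 0 ≤ y) :
    Phi a y = (∫ x in Set.Ioi 0, f a x) - ∫ x in (0:ℝ)..y, f a x := by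
  rw [intervalIntegral.integral_of_le hy]
  have hsplit : Set.Ioc 0 y ∪ Set.Ioi y = Set.Ioi (0:ℝ) := Set.Ioc_union_Ioi_eq_Ioi hy
  have h1 : IntegrableOn (f a) (Set.Ioc 0 y) := (intF ha).mono_set (by
    intro x hx; exact hx.1)
  have h2 : IntegrableOn (f a) (Set.Ioi y) := (intF ha).mono_set (fun x hx =>
    lt_of_le_of_lt hy hx)
  rw [← hsplit, setIntegral_union (by simp [Set.disjoint_left]) measurableSet_Ioi h1 h2]
  simp [Phi]

lemma Eval {c : ℝ} (hc : 0 < c) : ∫ x in Set.Ioi 0, f c x = 2 ^ c * Real.Gamma c := by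
  have h := Real.integral_rpow_mul_exp_neg_mul_Ioi hc one_half_pos
  rw [show ((1:ℝ)/(1/2)) = 2 by norm_num] at h
  rw [← h]
  refine setIntegral_congr_fun measurableSet_Ioi (fun x hx => ?_)
  simp only [f]
  ring_nf

lemma f_intervalInt {c : ℝ} (hc : 0 < c) {y z : ℝ} (hy : 0 ≤ y) (hz : y ≤ z) :
    IntervalIntegrable (f c) volume y z := by
  rw [intervalIntegrable_iff_integrableOn_Ioc_of_le hz]
  exact (intF hc).mono_set (fun x hx => lt_of_le_of_lt hy hx.1)

lemma Phi_hasDeriv (a : ℝ) (ha : 0 < a) {y : ℝ} (hy : 0 < y) :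
    HasDerivAt (Phi a) (-(f a y)) y := by
  have hprim : HasDerivAt (fun u => ∫ x in (0:ℝ)..u, f a x) (f a y) y := by
    refine intervalIntegral.integral_hasDerivAt_right (f_intervalInt ha le_rfl hy.le) ?_ ?_
    · exact ⟨Set.Ioi 0, Ioi_mem_nhds hy, ((intF ha).mono_set le_rfl).aestronglyMeasurable⟩
    · exact f_contOn.continuousAt (Ioi_mem_nhds hy)
  have h2 : HasDerivAt (fun u => (∫ x in Set.Ioi 0, f a x) - ∫ x in (0:ℝ)..u, f a x)
      (-(f a y)) y := (hasDerivAt_const y _).sub hprim |>.congr_deriv (by ring)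
  refine h2.congr_of_eventuallyEq ?_
  filter_upwards [Ioi_mem_nhds hy] with u hu
  exact Phi_eq a ha (le_of_lt hu)

lemma Phi_contWithin (a : ℝ) (ha : 0 < a) : ContinuousWithinAt (Phi a) (Set.Ici 0) 0 := by
  have hprim : ContinuousWithinAt (fun u => ∫ x in (0:ℝ)..u, f a x) (Set.Icc 0 1) 0 := by
    apply intervalIntegral.continuousWithinAt_primitive (measure_singleton 0)
    simpa using f_intervalInt ha le_rfl zero_le_one
  have h : ContinuousWithinAt (fun u => (∫ x in Set.Ioi 0, f a x) - ∫ x in (0:ℝ)..u, f a x)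
      (Set.Ici 0) 0 := by
    rw [ContinuousWithinAt, ← nhdsWithin_Icc_eq_nhdsGE (zero_lt_one (α := ℝ))]
    exact (continuousWithinAt_const.sub hprim)
  refine h.congr (fun u hu => Phi_eq a ha hu) (Phi_eq a ha le_rfl)

lemma Phi_tendsto (a : ℝ) (ha : 0 < a) : Tendsto (Phi a) atTop (𝓝 0) := by
  have h := intervalIntegral_tendsto_integral_Ioi 0 (intF ha) tendsto_id
  have h2 : Tendsto (fun y => (∫ x in Set.Ioi 0, f a x) - ∫ x in (0:ℝ)..y, f a x)
      atTop (𝓝 ((∫ x in Set.Ioi 0, f a x) - ∫ x in Set.Ioi 0, f a x)) :=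
    tendsto_const_nhds.sub h
  rw [sub_self] at h2
  refine h2.congr' ?_
  filter_upwards [eventually_ge_atTop (0:ℝ)] with y hy
  exact (Phi_eq a ha hy).symm

lemma Phi_nonneg (a : ℝ) {y : ℝ} (hy : 0 ≤ y) : 0 ≤ Phi a y :=
  setIntegral_nonneg measurableSet_Ioi (fun x hx => f_nonneg (le_trans hy (le_of_lt hx)))

lemma Phi_le (a : ℝ) (ha : 0 < a) {y : ℝ} (hy : 0 ≤ y) :
    Phi a y ≤ 2 ^ a * Real.Gamma a := by
  rw [← Eval ha]
  refine setIntegral_mono_set (intF ha) ?_ ?_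
  · exact (ae_restrict_iff' measurableSet_Ioi).2 (ae_of_all _ (fun x hx => f_nonneg (le_of_lt hx)))
  · exact HasSubset.Subset.eventuallyLE (fun x hx => lt_of_le_of_lt hy hx)

noncomputable def K (a c : ℝ) : ℝ := ∫ y in Set.Ioi 0, f c y * Phi a y

lemma Phi_contOn (a : ℝ) (ha : 0 < a) : ContinuousOn (Phi a) (Set.Ioi 0) :=
  fun y hy => (Phi_hasDeriv a ha hy).continuousAt.continuousWithinAt

lemma int_f_Phi (a : ℝ) (ha : 0 < a) {c : ℝ} (hc : 0 < c) :
    IntegrableOn (fun y => f c y * Phi a y) (Set.Ioi 0) := by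
  refine Integrable.mono' ((intF hc).mul_const (2 ^ a * Real.Gamma a)) ?_ ?_
  · exact (f_contOn.mul (Phi_contOn a ha)).aestronglyMeasurable measurableSet_Ioi
  · refine (ae_restrict_iff' measurableSet_Ioi).2 (ae_of_all _ (fun y hy => ?_))
    have h0 : (0:ℝ) < y := hy
    rw [Real.norm_eq_abs, abs_mul, abs_of_nonneg (f_nonneg h0.le),
      abs_of_nonneg (Phi_nonneg a h0.le)]
    exact mul_le_mul_of_nonneg_left (Phi_le a ha h0.le) (f_nonneg h0.le)

lemma K_rec (a : ℝ) (ha : 0 < a) {c : ℝ} (hc : a ≤ c) :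
    K a (c + 1) = 2 * c * K a c - 2 * Real.Gamma (a + c) := by
  have hc0 : 0 < c := lt_of_lt_of_le ha hc
  set u : ℝ → ℝ := fun y => -2 * (Real.exp (-y / 2) * y ^ c) with hu
  set g : ℝ → ℝ := fun y => u y * Phi a y with hg
  have hucont : Continuous u := by
    apply Continuous.mul continuous_const
    apply Continuous.mul (Real.continuous_exp.comp (by continuity))
    exact continuous_iff_continuousAt.2
      (fun x => Real.continuousAt_rpow_const x c (Or.inr hc0.le))
  have huderiv : ∀ y : ℝ, 0 < y → HasDerivAt u
      (Real.exp (-y / 2) * y ^ c - 2 * c * (Real.exp (-y / 2) * y ^ (c - 1))) y := by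
    intro y hy
    have h1 : HasDerivAt (fun y : ℝ => -y / 2) (-1 / 2) y := by
      simpa using ((hasDerivAt_id y).neg.div_const 2)
    have hexp : HasDerivAt (fun y : ℝ => Real.exp (-y / 2))
        (Real.exp (-y / 2) * (-1 / 2)) y := (Real.hasDerivAt_exp _).comp y h1
    have hpow : HasDerivAt (fun y : ℝ => y ^ c) (c * y ^ (c - 1)) y :=
      Real.hasDerivAt_rpow_const (Or.inl hy.ne')
    have : HasDerivAt u (-2 * (Real.exp (-y / 2) * (-1 / 2) * y ^ c
        + Real.exp (-y / 2) * (c * y ^ (c - 1)))) y := ((hexp.mul hpow).const_mul (-2))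
    convert this using 1
    ring
  have hgderiv : ∀ y ∈ Set.Ioi (0:ℝ), HasDerivAt g
      ((Real.exp (-y / 2) * y ^ c - 2 * c * (Real.exp (-y / 2) * y ^ (c - 1))) * Phi a y
        + u y * (-(f a y))) y := by
    intro y hy
    exact (huderiv y hy).mul (Phi_hasDeriv a ha hy)
  -- pointwise identity for the derivative on Ioi 0
  have hgd_eq : ∀ y ∈ Set.Ioi (0:ℝ),
      (Real.exp (-y / 2) * y ^ c - 2 * c * (Real.exp (-y / 2) * y ^ (c - 1))) * Phi a y
        + u y * (-(f a y))
      = f (c + 1) y * Phi a y - 2 * c * (f c y * Phi a y)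
        + 2 * (Real.exp (-y) * y ^ (a + c - 1)) := by
    intro y hy
    have h0 : (0:ℝ) < y := hy
    have h1 : y ^ c * y ^ (a - 1) = y ^ (a + c - 1) := by
      rw [← Real.rpow_add h0]; ring_nf
    have h2 : Real.exp (-y / 2) * Real.exp (-y / 2) = Real.exp (-y) := by
      rw [← Real.exp_add]; ring_nf
    simp only [f, hu, show c + 1 - 1 = c by ring]
    rw [← h1, ← h2]; ring
  have hC : (0:ℝ) ≤ 2 ^ a * Real.Gamma a := by
    have := Real.Gamma_pos_of_pos ha
    positivity
  have hint1 : IntegrableOn (fun y => f (c+1) y * Phi a y) (Set.Ioi 0) :=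
    int_f_Phi a ha (by linarith)
  have hint2 : IntegrableOn (fun y => f c y * Phi a y) (Set.Ioi 0) :=
    int_f_Phi a ha hc0
  have hint3 : IntegrableOn (fun y => Real.exp (-y) * y ^ (a + c - 1)) (Set.Ioi 0) := by
    have := Real.GammaIntegral_convergent (s := a + c) (by linarith)
    exact this
  have hintRHS : IntegrableOn (fun y =>
      f (c + 1) y * Phi a y - 2 * c * (f c y * Phi a y)
        + 2 * (Real.exp (-y) * y ^ (a + c - 1))) (Set.Ioi 0) :=
    (hint1.sub (hint2.const_mul (2*c))).add (hint3.const_mul 2)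
  have hintg' : IntegrableOn (fun y =>
      (Real.exp (-y / 2) * y ^ c - 2 * c * (Real.exp (-y / 2) * y ^ (c - 1))) * Phi a y
        + u y * (-(f a y))) (Set.Ioi 0) :=
    hintRHS.congr_fun (fun y hy => (hgd_eq y hy).symm) measurableSet_Ioi
  have hcont : ContinuousWithinAt g (Set.Ici 0) 0 :=
    hucont.continuousWithinAt.mul (Phi_contWithin a ha)
  have htend : Tendsto g atTop (𝓝 0) := by
    have hb : Tendsto (fun y : ℝ => 2 * (2 ^ a * Real.Gamma a) * (y ^ c * Real.exp (-(1/2) * y)))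
        atTop (𝓝 (2 * (2 ^ a * Real.Gamma a) * 0)) :=
      (tendsto_rpow_mul_exp_neg_mul_atTop_nhds_zero c (1/2) one_half_pos).const_mul _
    rw [mul_zero] at hb
    refine squeeze_zero_norm' ?_ hb
    filter_upwards [eventually_ge_atTop (0:ℝ)] with y hy
    have hyc : (0:ℝ) ≤ y ^ c := Real.rpow_nonneg hy _
    have h1 : ‖g y‖ = 2 * (Real.exp (-y / 2) * y ^ c) * |Phi a y| := by
      rw [hg, norm_mul, Real.norm_eq_abs, Real.norm_eq_abs, hu]
      rw [abs_mul, abs_mul, abs_of_nonneg (Real.exp_pos _).le, abs_of_nonneg hyc]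
      norm_num
    rw [h1, abs_of_nonneg (Phi_nonneg a hy)]
    have h2 : Phi a y ≤ 2 ^ a * Real.Gamma a := Phi_le a ha hy
    have h3 : Real.exp (-(1/2) * y) = Real.exp (-y / 2) := by ring_nf
    rw [h3]
    nlinarith [mul_nonneg (Real.exp_pos (-y/2)).le hyc, Phi_nonneg a hy]
  have hFTC := integral_Ioi_of_hasDerivAt_of_tendsto hcont hgderiv hintg' htend
  have hg0 : g 0 = 0 := by
    simp [hg, hu, Real.zero_rpow hc0.ne']
  rw [hg0, sub_zero] at hFTC
  rw [setIntegral_congr_fun measurableSet_Ioi (fun y hy => hgd_eq y hy)] at hFTC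
  have hA : IntegrableOn (fun x => f (c+1) x * Phi a x - 2*c*(f c x * Phi a x))
      (Set.Ioi 0) := hint1.sub (hint2.const_mul (2*c))
  have hB : IntegrableOn (fun x => 2 * (Real.exp (-x) * x ^ (a + c - 1))) (Set.Ioi 0) :=
    hint3.const_mul 2
  have hC2 : IntegrableOn (fun x => 2*c*(f c x * Phi a x)) (Set.Ioi 0) :=
    hint2.const_mul (2*c)
  rw [integral_add hA hB, integral_sub hint1 hC2, integral_const_mul,
    integral_const_mul] at hFTC
  have hG : Real.Gamma (a + c) = ∫ x in Set.Ioi 0, Real.exp (-x) * x ^ (a + c - 1) :=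
    Real.Gamma_eq_integral (by linarith)
  rw [← hG] at hFTC
  simp only [K]
  linarith

lemma K_base (a : ℝ) (ha : 0 < a) : K a a = (2 ^ a * Real.Gamma a) ^ 2 / 2 := by
  set g : ℝ → ℝ := fun y => -(Phi a y ^ 2) / 2 with hg
  have hgderiv : ∀ y ∈ Set.Ioi (0:ℝ), HasDerivAt g (f a y * Phi a y) y := by
    intro y hy
    have h : HasDerivAt g (-(((2:ℕ):ℝ) * Phi a y ^ (2 - 1) * -f a y) / 2) y :=
      ((Phi_hasDeriv a ha hy).pow 2).neg.div_const 2
    convert h using 1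
    ring
  have hcont : ContinuousWithinAt g (Set.Ici 0) 0 :=
    (((Phi_contWithin a ha).pow 2).neg).div_const 2
  have htend : Tendsto g atTop (𝓝 0) := by
    have := (((Phi_tendsto a ha).pow 2).neg).div_const 2
    simpa using this
  have hFTC := integral_Ioi_of_hasDerivAt_of_tendsto hcont hgderiv (int_f_Phi a ha ha) htend
  have hg0 : g 0 = -((2 ^ a * Real.Gamma a) ^ 2) / 2 := by
    have : Phi a 0 = 2 ^ a * Real.Gamma a := by
      rw [Phi, ← Eval ha]
    rw [hg]; simp only []; rw [this]
  rw [hg0] at hFTC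
  simp only [K]
  rw [hFTC]; ring

lemma K_closed (a : ℝ) (ha : 0 < a) (m : ℕ) :
    K a (a + m) = 2 ^ (2*a + m - 1) * Real.Gamma a * Real.Gamma (a + m)
      - Real.Gamma (a + m) * ∑ j ∈ Finset.range m,
          2 ^ ((m:ℝ) - j) * Real.Gamma (2*a + j) / Real.Gamma (a + j + 1) := by
  induction m with
  | zero =>
      simp only [Nat.cast_zero, add_zero, Finset.range_zero, Finset.sum_empty, mul_zero, sub_zero]
      rw [K_base a ha]
      rw [mul_pow, ← Real.rpow_natCast (2 ^ a) 2, ← Real.rpow_mul (by norm_num),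
        Real.rpow_sub (by norm_num), Real.rpow_one]
      push_cast
      ring
  | succ m ih =>
      have hm0 : (0:ℝ) ≤ m := Nat.cast_nonneg m
      have hrec := K_rec a ha (c := a + m) (by linarith)
      have hm1 : a + ((m:ℝ) + 1) = (a + m) + 1 := by ring
      have hGadd : Real.Gamma (a + m + 1) = (a + m) * Real.Gamma (a + m) :=
        Real.Gamma_add_one (by linarith : (0:ℝ) < a + m).ne'
      have hGne : Real.Gamma (a + m + 1) ≠ 0 :=
        (Real.Gamma_pos_of_pos (by linarith : (0:ℝ) < a + m + 1)).ne'
      have hGpos : 0 < Real.Gamma (a + m) := Real.Gamma_pos_of_pos (by linarith)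
      have hane : a + (m:ℝ) ≠ 0 := by linarith
      push_cast
      rw [hm1, hrec, ih, Finset.sum_range_succ]
      have hsum2 : ∑ j ∈ Finset.range m,
          2 ^ (((m:ℝ)+1) - j) * Real.Gamma (2*a + j) / Real.Gamma (a + j + 1)
          = 2 * ∑ j ∈ Finset.range m,
              2 ^ ((m:ℝ) - j) * Real.Gamma (2*a + j) / Real.Gamma (a + j + 1) := by
        rw [Finset.mul_sum]
        refine Finset.sum_congr rfl fun j hj => ?_
        rw [show ((m:ℝ)+1) - j = 1 + ((m:ℝ) - j) by ring,
          Real.rpow_add (by norm_num), Real.rpow_one]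
        ring
      rw [hsum2, show ((m:ℝ)+1) - (m:ℝ) = 1 by ring, Real.rpow_one,
        show 2*a + ((m:ℝ)+1) - 1 = (2*a + (m:ℝ) - 1) + 1 by ring,
        Real.rpow_add (by norm_num : (0:ℝ) < 2), Real.rpow_one,
        show a + (a + (m:ℝ)) = 2*a + (m:ℝ) by ring, hGadd]
      field_simp
      ring

lemma inner_int (a : ℝ) (ha : 0 < a) {y : ℝ} (hy : 0 < y) :
    ∫ x in Set.Ioi (0:ℝ), sgn (y - x) * f a x
      = 2 ^ a * Real.Gamma a - 2 * Phi a y := by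
  have hpt : ∀ x : ℝ, sgn (y - x) * f a x
      = f a x - 2 * (Set.Ioi y).indicator (f a) x := by
    intro x
    by_cases hxy : x ≤ y
    · have h1 : sgn (y - x) = 1 := if_pos (by linarith)
      have h2 : (Set.Ioi y).indicator (f a) x = 0 :=
        Set.indicator_of_notMem (by simpa using hxy) _
      rw [h1, h2]; ring
    · push_neg at hxy
      have h1 : sgn (y - x) = -1 := if_neg (by simp; linarith)
      have h2 : (Set.Ioi y).indicator (f a) x = f a x :=
        Set.indicator_of_mem (by simpa using hxy) _
      rw [h1, h2]; ring
  rw [show (fun x => sgn (y - x) * f a x)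
      = fun x => f a x - 2 * (Set.Ioi y).indicator (f a) x from funext hpt]
  have hind : IntegrableOn (fun x => (Set.Ioi y).indicator (f a) x) (Set.Ioi 0) :=
    ((intF ha).indicator measurableSet_Ioi).mono_set le_rfl
  rw [integral_sub (intF ha) (hind.const_mul 2), integral_const_mul, Eval ha,
    setIntegral_indicator measurableSet_Ioi,
    show Set.Ioi (0:ℝ) ∩ Set.Ioi y = Set.Ioi y from by
      rw [Set.Ioi_inter_Ioi, max_eq_right hy.le]]
  rfl

end SgnGammaAux

open SgnGammaAux in
/-- Let `a > 0` and let `ℓ` be a positive integer. Then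
`∫_0^∞ ∫_0^∞ sgn(y-x) e^{-x/2} x^{a-1} e^{-y/2} y^{a+ℓ-1} dx dy
  = 2^{2a+ℓ+1} Γ(a) Γ(a+ℓ) ∑_{k=1}^ℓ 2^{-(2a+ℓ-k)} Γ(2a+ℓ-k) / (Γ(a) Γ(a+ℓ-k+1))`. -/
theorem double_integral_sgn_gamma (a : ℝ) (ha : 0 < a) (l : ℕ) (hl : 0 < l) :
    (∫ y in Set.Ioi (0 : ℝ), ∫ x in Set.Ioi (0 : ℝ),
        sgn (y - x) * (Real.exp (-x / 2) * x ^ (a - 1))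
          * (Real.exp (-y / 2) * y ^ (a + (l : ℝ) - 1)))
      = (2 : ℝ) ^ (2 * a + (l : ℝ) + 1) * Real.Gamma a * Real.Gamma (a + (l : ℝ)) *
          ∑ k ∈ Finset.Icc 1 l,
            (2 : ℝ) ^ (-(2 * a + (l : ℝ) - (k : ℝ)))
              * Real.Gamma (2 * a + (l : ℝ) - (k : ℝ))
              / (Real.Gamma a * Real.Gamma (a + (l : ℝ) - (k : ℝ) + 1)) := by
  have hl0 : (0:ℝ) ≤ l := Nat.cast_nonneg l
  have hb : (0:ℝ) < a + l := by linarith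
  have hGa : 0 < Real.Gamma a := Real.Gamma_pos_of_pos ha
  have hGb : 0 < Real.Gamma (a + l) := Real.Gamma_pos_of_pos hb
  have hinner : ∀ y ∈ Set.Ioi (0:ℝ),
      (∫ x in Set.Ioi (0:ℝ), sgn (y - x) * (Real.exp (-x / 2) * x ^ (a - 1))
          * (Real.exp (-y / 2) * y ^ (a + (l:ℝ) - 1)))
      = (2 ^ a * Real.Gamma a) * f (a + l) y - 2 * (f (a + l) y * Phi a y) := by
    intro y hy
    rw [integral_mul_const]
    have : (∫ x in Set.Ioi (0:ℝ), sgn (y - x) * (Real.exp (-x / 2) * x ^ (a - 1)))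
        = 2 ^ a * Real.Gamma a - 2 * Phi a y := inner_int a ha hy
    rw [this]
    simp only [f]
    ring
  rw [setIntegral_congr_fun measurableSet_Ioi hinner,
    integral_sub ((intF hb).const_mul _) ((int_f_Phi a ha hb).const_mul 2),
    integral_const_mul, integral_const_mul, Eval hb]
  have hK : (∫ y in Set.Ioi (0:ℝ), f (a+(l:ℝ)) y * Phi a y) = K a (a + l) := rfl
  rw [hK, K_closed a ha l]
  -- now pure algebra + sum reindexing
  have h2exp : (2:ℝ) ^ a * 2 ^ (a + (l:ℝ)) = 2 * 2 ^ (2*a + (l:ℝ) - 1) := by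
    rw [← Real.rpow_add two_pos,
      show a + (a + (l:ℝ)) = 1 + (2*a + (l:ℝ) - 1) by ring,
      Real.rpow_add two_pos, Real.rpow_one]
  have hEE : (2:ℝ) ^ a * Real.Gamma a * (2 ^ (a + (l:ℝ)) * Real.Gamma (a + l))
      = 2 * (2 ^ (2*a + (l:ℝ) - 1) * Real.Gamma a * Real.Gamma (a + l)) := by
    linear_combination (Real.Gamma a * Real.Gamma (a + (l:ℝ))) * h2exp
  rw [hEE]
  rw [show ∀ (S : ℝ), 2 * (2 ^ (2*a + (l:ℝ) - 1) * Real.Gamma a * Real.Gamma (a + l))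
      - 2 * (2 ^ (2*a + (l:ℝ) - 1) * Real.Gamma a * Real.Gamma (a + l)
        - Real.Gamma (a + l) * S) = 2 * (Real.Gamma (a + l) * S) from fun S => by ring]
  -- reindex
  rw [Finset.mul_sum, Finset.mul_sum, Finset.mul_sum]
  refine Finset.sum_nbij' (fun j => l - j) (fun k => l - k) ?_ ?_ ?_ ?_ ?_
  · intro j hj
    simp only [Finset.mem_range] at hj
    simp only [Finset.mem_Icc]
    omega
  · intro k hk
    simp only [Finset.mem_Icc] at hk
    simp only [Finset.mem_range]
    omega
  · intro j hj
    simp only [Finset.mem_range] at hj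
    show l - (l - j) = j
    omega
  · intro k hk
    simp only [Finset.mem_Icc] at hk
    show l - (l - k) = k
    omega
  · intro j hj
    rw [Finset.mem_range] at hj
    have hcast : ((l - j : ℕ) : ℝ) = (l:ℝ) - j := by
      rw [Nat.cast_sub hj.le]
    rw [hcast,
      show 2*a + (l:ℝ) - ((l:ℝ) - (j:ℝ)) = 2*a + j by ring,
      show a + (l:ℝ) - ((l:ℝ) - (j:ℝ)) + 1 = a + j + 1 by ring]
    have hGj : Real.Gamma (a + j + 1) ≠ 0 :=
      (Real.Gamma_pos_of_pos (by positivity)).ne'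
    have hsplit2 : (2:ℝ) ^ (2*a + (l:ℝ) + 1) = 2 * 2 ^ ((l:ℝ) - j) * 2 ^ (2*a + (j:ℝ)) := by
      rw [show 2*a + (l:ℝ) + 1 = 1 + ((l:ℝ) - j) + (2*a + (j:ℝ)) by ring,
        Real.rpow_add two_pos, Real.rpow_add two_pos, Real.rpow_one]
    rw [Real.rpow_neg two_pos.le, hsplit2]
    have h2aj : (0:ℝ) < 2 ^ (2*a + (j:ℝ)) := Real.rpow_pos_of_pos two_pos _
    field_simp
end

section
/- Let k be a positive integer, let G be a chi-squared random variable with k degrees of freedom, and let ξ be a positive random variable independent of G with E[ξ^{−k/2}] < ∞. Then for every c > 0, lim_{s→∞} s^{k/2} · Pr(G ≤ c/(s ξ)) = c^{k/2} E[ξ^{−k/2}] / ((k/2) 2^{k/2} Γ(k/2)). -/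
open Filter MeasureTheory ProbabilityTheory intervalIntegral


lemma aux_intble (a : ℝ) (ha : 0 < a) (x : ℝ) :
    IntervalIntegrable (fun t : ℝ => t ^ (a-1) * Real.exp (-t/2)) volume 0 x := by
  apply (intervalIntegral.intervalIntegrable_rpow' (by linarith : (-1:ℝ) < a - 1)).mul_continuousOn
  exact (Real.continuous_exp.comp (continuous_id.neg.div_const 2)).continuousOn

lemma aux_err (a : ℝ) (ha : 0 < a) (x : ℝ) (hx : 0 ≤ x) :
    |(∫ t in (0:ℝ)..x, t ^ (a-1) * Real.exp (-t/2)) - x ^ a / a| ≤ x ^ (a+1) / (2*(a+1)) := by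
  have ha1 : a + 1 ≠ 0 := by positivity
  have h1 : (∫ t in (0:ℝ)..x, t ^ (a-1)) = x ^ a / a := by
    rw [integral_rpow (Or.inl (by linarith))]
    rw [show a - 1 + 1 = a by ring, Real.zero_rpow (ne_of_gt ha)]
    ring
  have hint1 : IntervalIntegrable (fun t : ℝ => t ^ (a-1)) volume 0 x :=
    intervalIntegral.intervalIntegrable_rpow' (by linarith)
  have h2 : (∫ t in (0:ℝ)..x, t ^ (a-1) * Real.exp (-t/2)) - x ^ a / a
      = ∫ t in (0:ℝ)..x, t ^ (a-1) * (Real.exp (-t/2) - 1) := by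
    rw [← h1, ← intervalIntegral.integral_sub (aux_intble a ha x) hint1]
    congr 1
    ext t
    ring
  rw [h2]
  have h3 : (∫ t in (0:ℝ)..x, t ^ a / 2) = x ^ (a+1) / (2*(a+1)) := by
    rw [intervalIntegral.integral_div, integral_rpow (Or.inl (by linarith))]
    rw [Real.zero_rpow ha1, sub_zero, div_div, mul_comm (a+1) 2]
  rw [← h3]
  have habs : |∫ t in (0:ℝ)..x, t ^ (a-1) * (Real.exp (-t/2) - 1)|
      ≤ ∫ t in (0:ℝ)..x, |t ^ (a-1) * (Real.exp (-t/2) - 1)| :=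
    intervalIntegral.abs_integral_le_integral_abs hx
  refine habs.trans ?_
  apply intervalIntegral.integral_mono_on hx
  · have he : (fun u : ℝ => u ^ (a-1) * (Real.exp (-u/2) - 1))
        = fun u : ℝ => u ^ (a-1) * Real.exp (-u/2) - u ^ (a-1) := by ext u; ring
    exact (he ▸ ((aux_intble a ha x).sub hint1)).abs
  · exact (intervalIntegral.intervalIntegrable_rpow' (by linarith : (-1:ℝ) < a)).div_const 2
  · intro t ht
    rcases ht with ⟨ht0, htx⟩
    rcases eq_or_lt_of_le ht0 with h | h
    · rw [← h]
      norm_num [Real.zero_rpow (ne_of_gt ha)]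
    · have h4 : |Real.exp (-t/2) - 1| ≤ t/2 := by
        rw [abs_sub_comm, abs_of_nonneg (by simp [Real.exp_le_one_iff]; linarith)]
        have := Real.add_one_le_exp (-t/2)
        linarith
      have h5 : t ^ a = t ^ (a-1) * t := by
        rw [show a = a-1+1 by ring, Real.rpow_add_one (ne_of_gt h)]
        ring_nf
      rw [abs_mul, abs_of_nonneg (Real.rpow_nonneg ht0 _)]
      calc t ^ (a-1) * |Real.exp (-t/2) - 1| ≤ t ^ (a-1) * (t/2) :=
            mul_le_mul_of_nonneg_left h4 (Real.rpow_nonneg ht0 _)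
        _ = t ^ a / 2 := by rw [h5]; ring

lemma aux_tendsto (a : ℝ) (ha : 0 < a) :
    Tendsto (fun x : ℝ => x ^ (-a) * ∫ t in (0:ℝ)..x, t ^ (a-1) * Real.exp (-t/2))
      (nhdsWithin 0 (Set.Ioi 0)) (nhds (1/a)) := by
  have key : ∀ x ∈ Set.Ioi (0:ℝ),
      ‖x ^ (-a) * (∫ t in (0:ℝ)..x, t ^ (a-1) * Real.exp (-t/2)) - 1/a‖ ≤ x / (2*(a+1)) := by
    intro x hx
    have hx0 : (0:ℝ) < x := hx
    have hxa : (0:ℝ) < x ^ a := Real.rpow_pos_of_pos hx0 a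
    have hxna : (0:ℝ) < x ^ (-a) := Real.rpow_pos_of_pos hx0 _
    have h1 : x ^ (-a) * (x ^ a / a) = 1/a := by
      rw [Real.rpow_neg hx0.le]
      field_simp
    have h2 : x ^ (-a) * (∫ t in (0:ℝ)..x, t ^ (a-1) * Real.exp (-t/2)) - 1/a
        = x ^ (-a) * ((∫ t in (0:ℝ)..x, t ^ (a-1) * Real.exp (-t/2)) - x^a/a) := by
      rw [mul_sub, h1]
    rw [h2, Real.norm_eq_abs, abs_mul, abs_of_pos hxna]
    calc x^(-a) * |(∫ t in (0:ℝ)..x, t ^ (a-1) * Real.exp (-t/2)) - x^a/a|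
        ≤ x^(-a) * (x^(a+1)/(2*(a+1))) :=
          mul_le_mul_of_nonneg_left (aux_err a ha x hx0.le) hxna.le
      _ = x/(2*(a+1)) := by
          rw [Real.rpow_add hx0 a 1, Real.rpow_one, Real.rpow_neg hx0.le]
          field_simp
  have hb : Tendsto (fun x : ℝ => x/(2*(a+1))) (nhdsWithin 0 (Set.Ioi 0)) (nhds 0) := by
    have : Tendsto (fun x : ℝ => x/(2*(a+1))) (nhds 0) (nhds (0/(2*(a+1)))) :=
      (continuous_id.div_const _).tendsto 0
    simpa using this.mono_left nhdsWithin_le_nhds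
  have h0 := squeeze_zero_norm' (eventually_nhdsWithin_of_forall key) hb
  have := h0.add_const (1/a)
  simpa using this

set_option maxHeartbeats 1000000 in
/-- Let `k` be a positive integer, `G` a chi-squared random variable with `k`
degrees of freedom (i.e., with CDF `F_{χ²_k}(x) = (2^{k/2} Γ(k/2))⁻¹ ∫_0^x t^{k/2-1} e^{-t/2} dt`
for `x ≥ 0`), and `ξ` a positive random variable independent of `G` with `E[ξ^{-k/2}] < ∞`.
Then for every `c > 0`,
`lim_{s→∞} s^{k/2} Pr(G ≤ c/(s ξ)) = c^{k/2} E[ξ^{-k/2}] / ((k/2) 2^{k/2} Γ(k/2))`. -/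
theorem chiSq_scaled_outage_limit
    {Ω : Type*} [MeasurableSpace Ω] (P : Measure Ω) [IsProbabilityMeasure P]
    (k : ℕ) (hk : 0 < k) (G ξ : Ω → ℝ)
    (hGm : Measurable G) (hξm : Measurable ξ)
    (hindep : IndepFun G ξ P)
    (hG : ∀ x : ℝ, 0 ≤ x →
      (P {ω | G ω ≤ x}).toReal
        = (1 / ((2 : ℝ) ^ ((k : ℝ) / 2) * Real.Gamma ((k : ℝ) / 2))) *
            ∫ t in (0 : ℝ)..x, t ^ ((k : ℝ) / 2 - 1) * Real.exp (-t / 2))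
    (hGpos : ∀ᵐ ω ∂P, 0 < G ω)
    (hξpos : ∀ᵐ ω ∂P, 0 < ξ ω)
    (hint : Integrable (fun ω => ξ ω ^ (-(k : ℝ) / 2)) P)
    (c : ℝ) (hc : 0 < c) :
    Tendsto (fun s : ℝ =>
        s ^ ((k : ℝ) / 2) * (P {ω | G ω ≤ c / (s * ξ ω)}).toReal)
      atTop
      (nhds (c ^ ((k : ℝ) / 2) * (∫ ω, ξ ω ^ (-(k : ℝ) / 2) ∂P)
        / (((k : ℝ) / 2) * (2 : ℝ) ^ ((k : ℝ) / 2) * Real.Gamma ((k : ℝ) / 2)))) := by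
  have hneg : (-(k : ℝ) / 2) = -((k:ℝ)/2) := by ring
  set a : ℝ := (k:ℝ)/2 with ha_def
  have ha : 0 < a := by positivity
  rw [hneg] at hint ⊢
  set Cst : ℝ := (2:ℝ) ^ a * Real.Gamma a with hC_def
  have hC : 0 < Cst := mul_pos (Real.rpow_pos_of_pos two_pos a) (Real.Gamma_pos_of_pos ha)
  set F : ℝ → ℝ := fun x => (P {ω | G ω ≤ x}).toReal with hF_def
  have hFmono : Monotone F := by
    intro x y hxy
    exact ENNReal.toReal_mono (measure_ne_top _ _)
      (measure_mono (fun ω h => le_trans h hxy))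
  have hFmeas : Measurable F := hFmono.measurable
  have hFnonneg : ∀ x, 0 ≤ F x := fun x => ENNReal.toReal_nonneg
  have hFform : ∀ x : ℝ, 0 ≤ x →
      F x = Cst⁻¹ * ∫ t in (0:ℝ)..x, t ^ (a - 1) * Real.exp (-t/2) := by
    intro x hx
    show (P {ω | G ω ≤ x}).toReal = _
    rw [hG x hx, one_div]
  have hFbound : ∀ x : ℝ, 0 ≤ x → F x ≤ Cst⁻¹ * (x ^ a / a) := by
    intro x hx
    rw [hFform x hx]
    apply mul_le_mul_of_nonneg_left _ (inv_nonneg.mpr hC.le)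
    have h1 : (∫ t in (0:ℝ)..x, t ^ (a-1)) = x ^ a / a := by
      rw [integral_rpow (Or.inl (by linarith))]
      rw [show a - 1 + 1 = a by ring, Real.zero_rpow (ne_of_gt ha)]
      ring
    rw [← h1]
    apply intervalIntegral.integral_mono_on hx (aux_intble a ha x)
      (intervalIntegral.intervalIntegrable_rpow' (by linarith))
    intro t ht
    exact mul_le_of_le_one_right (Real.rpow_nonneg ht.1 _)
      (Real.exp_le_one_iff.mpr (by linarith [ht.1]))
  -- measures
  set ν := Measure.map G P with hν
  set μ := Measure.map ξ P with hμ
  have hνprob : IsProbabilityMeasure ν := Measure.isProbabilityMeasure_map hGm.aemeasurable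
  have hμprob : IsProbabilityMeasure μ := Measure.isProbabilityMeasure_map hξm.aemeasurable
  have hmap : Measure.map (fun ω => (G ω, ξ ω)) P = ν.prod μ :=
    (indepFun_iff_map_prod_eq_prod_map_map hGm.aemeasurable hξm.aemeasurable).mp hindep
  have hν_Iic : ∀ y : ℝ, ν (Set.Iic y) = P {ω | G ω ≤ y} := by
    intro y
    rw [hν, Measure.map_apply hGm measurableSet_Iic]
    rfl
  have hνmono : Monotone (fun y : ℝ => ν (Set.Iic y)) :=
    fun x y hxy => measure_mono (Set.Iic_subset_Iic.mpr hxy)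
  clear_value a Cst
  have key : ∀ s : ℝ, 0 < s →
      (P {ω | G ω ≤ c / (s * ξ ω)}).toReal = ∫ t, F (c / (s * t)) ∂μ := by
    intro s hs
    have hSmeas : MeasurableSet {p : ℝ × ℝ | p.1 ≤ c / (s * p.2)} :=
      measurableSet_le measurable_fst (measurable_const.div (measurable_const.mul measurable_snd))
    have h1 : P {ω | G ω ≤ c / (s * ξ ω)}
        = Measure.map (fun ω => (G ω, ξ ω)) P {p : ℝ × ℝ | p.1 ≤ c / (s * p.2)} := by
      rw [Measure.map_apply (hGm.prodMk hξm) hSmeas]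
      rfl
    have h2 : ∀ t : ℝ, (fun g : ℝ => (g, t)) ⁻¹' {p : ℝ × ℝ | p.1 ≤ c / (s * p.2)}
        = Set.Iic (c/(s*t)) := fun t => rfl
    rw [h1, hmap, Measure.prod_apply_symm hSmeas]
    simp_rw [h2]
    have hmeas2 : AEMeasurable (fun t : ℝ => ν (Set.Iic (c/(s*t)))) μ :=
      (hνmono.measurable.comp (measurable_const.div (measurable_const.mul measurable_id))).aemeasurable
    rw [← MeasureTheory.integral_toReal hmeas2 (ae_of_all _ fun t => measure_lt_top ν _)]
    congr 1
    ext t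
    rw [hν_Iic]
  clear_value F ν μ
  -- eventual equality of the prelimit
  have heq : ∀ᶠ s : ℝ in atTop,
      s ^ a * (P {ω | G ω ≤ c / (s * ξ ω)}).toReal = ∫ t, s ^ a * F (c / (s * t)) ∂μ := by
    filter_upwards [eventually_gt_atTop (0:ℝ)] with s hs
    rw [key s hs]
    exact (MeasureTheory.integral_const_mul _ _).symm
  -- positivity a.e.
  have hμpos : ∀ᵐ t ∂μ, t ∈ Set.Ioi (0:ℝ) := by
    rw [hμ]
    exact (MeasureTheory.ae_map_iff hξm.aemeasurable measurableSet_Ioi).mpr hξpos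
  -- integrability of t ↦ t^(-a) w.r.t. μ
  have hrm : Measurable fun t : ℝ => t ^ (-a) := by measurability
  have hintμ : Integrable (fun t : ℝ => t ^ (-a)) μ := by
    rw [hμ, integrable_map_measure hrm.aestronglyMeasurable hξm.aemeasurable]
    exact hint
  -- DCT
  have hDCT : Tendsto (fun s : ℝ => ∫ t, s ^ a * F (c / (s * t)) ∂μ) atTop
      (nhds (∫ t, Cst⁻¹ * c ^ a / a * t ^ (-a) ∂μ)) := by
    apply MeasureTheory.tendsto_integral_filter_of_dominated_convergence
      (fun t => Cst⁻¹ * c ^ a / a * t ^ (-a))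
    · filter_upwards [eventually_gt_atTop (0:ℝ)] with s hs
      exact ((hFmeas.comp (measurable_const.div
        (measurable_const.mul measurable_id))).const_mul _).aestronglyMeasurable
    · filter_upwards [eventually_gt_atTop (0:ℝ)] with s hs
      filter_upwards [hμpos] with t ht
      have ht : (0:ℝ) < t := ht
      have hst : 0 < s * t := mul_pos hs ht
      have hsa : (0:ℝ) < s ^ a := Real.rpow_pos_of_pos hs a
      have hta : (0:ℝ) < t ^ a := Real.rpow_pos_of_pos ht a
      have hxpos : 0 < c / (s * t) := div_pos hc hst
      rw [Real.norm_eq_abs, abs_of_nonneg (mul_nonneg hsa.le (hFnonneg _))]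
      have e1 : (c/(s*t)) ^ a = c^a / (s^a * t^a) := by
        rw [Real.div_rpow hc.le hst.le, Real.mul_rpow hs.le ht.le]
      calc s^a * F (c/(s*t)) ≤ s^a * (Cst⁻¹ * ((c/(s*t))^a / a)) :=
            mul_le_mul_of_nonneg_left (hFbound _ hxpos.le) hsa.le
        _ = Cst⁻¹ * c^a / a * t^(-a) := by
            rw [e1, Real.rpow_neg ht.le]
            field_simp
    · exact hintμ.const_mul _
    · filter_upwards [hμpos] with t ht
      have ht : (0:ℝ) < t := ht
      have hct : (0:ℝ) < c / t := div_pos hc ht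
      have htend0 : Tendsto (fun s : ℝ => c/(s*t)) atTop (nhdsWithin 0 (Set.Ioi 0)) := by
        rw [tendsto_nhdsWithin_iff]
        constructor
        · have h := Tendsto.div_atTop (tendsto_const_nhds (x := c/t)) tendsto_id
          refine h.congr fun s => ?_
          simp only [id_eq]
          ring
        · filter_upwards [eventually_gt_atTop (0:ℝ)] with s hs
          exact div_pos hc (mul_pos hs ht)
      have hcomp := ((aux_tendsto a ha).const_mul Cst⁻¹).comp htend0
      have hfinal := hcomp.const_mul ((c/t) ^ a)
      have hval : (c/t) ^ a * (Cst⁻¹ * (1/a)) = Cst⁻¹ * c^a / a * t^(-a) := by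
        rw [Real.div_rpow hc.le ht.le, Real.rpow_neg ht.le]
        ring
      rw [hval] at hfinal
      apply hfinal.congr'
      filter_upwards [eventually_gt_atTop (0:ℝ)] with s hs
      have hst : 0 < s * t := mul_pos hs ht
      have hxpos : 0 < c / (s * t) := div_pos hc hst
      simp only [Function.comp]
      have hcta : (0:ℝ) < (c/t)^a := Real.rpow_pos_of_pos hct a
      have e2 : ((c/(s*t)) ^ (-a)) = s ^ a / (c/t) ^ a := by
        rw [show c/(s*t) = (c/t)/s by rw [div_div, mul_comm t s],
          Real.rpow_neg (div_nonneg hct.le hs.le), Real.div_rpow hct.le hs.le, inv_div]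
      rw [hFform _ hxpos.le, e2]
      field_simp
  have hmain := Tendsto.congr' (Filter.EventuallyEq.symm heq) hDCT
  have hlim_eq : (∫ t, Cst⁻¹ * c ^ a / a * t ^ (-a) ∂μ)
      = c ^ a * (∫ ω, ξ ω ^ (-a) ∂P) / (a * (2:ℝ) ^ a * Real.Gamma a) := by
    rw [MeasureTheory.integral_const_mul]
    have hmapint : (∫ t, t ^ (-a) ∂μ) = ∫ ω, ξ ω ^ (-a) ∂P := by
      rw [hμ, integral_map hξm.aemeasurable hrm.aestronglyMeasurable]
    rw [hmapint, hC_def]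
    generalize (∫ ω, ξ ω ^ (-a) ∂P) = E
    have hΓ : Real.Gamma a ≠ 0 := ne_of_gt (Real.Gamma_pos_of_pos ha)
    have h2a : ((2:ℝ) ^ a) ≠ 0 := ne_of_gt (Real.rpow_pos_of_pos two_pos a)
    have ha' : a ≠ 0 := ne_of_gt ha
    field_simp
  rwa [hlim_eq] at hmain
end
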